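/- Reduction of the primal error bound to block x²: suppose there exist τ' < ∞ and δ > 0 such that dist(x², X²(y)) ≤ τ'‖∇̃_x L_ρ(x¹,x²;y)‖ whenever ‖∇̃_x L_ρ(x¹,x²;y)‖ ≤ δ. Then there exists τ < ∞ such that dist((x¹,x²), X(y)) ≤ τ‖∇̃_x L_ρ(x¹,x²;y)‖ on the same region, using the identity x¹ - x¹* = ((1/ρ)MᵀM + I)(x² - x²*) - (1/ρ)∇̃_{x²}L_ρ(x¹,x²;y) for the minimizer (x¹*, x²*) with dist(x², x²*) = dist(x², X²(y)). -/

import Mathlib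

open scoped InnerProductSpace

lemma aux_quad_coeff (a c : ℝ) (ha : 0 ≤ a) (h : ∀ t : ℝ, 0 ≤ a*t^2 + c*t) : c = 0 := by
  rcases eq_or_lt_of_le ha with ha0 | ha0
  · have h1 := h 1; have h2 := h (-1)
    rw [← ha0] at h1 h2; simp at h1 h2; linarith
  · by_contra hc
    have h1 := h (-c/(2*a))
    have h2 : a * (-c/(2*a))^2 + c*(-c/(2*a)) = -(c^2/(4*a)) := by
      field_simp; ring
    rw [h2] at h1
    have : 0 < c^2/(4*a) := by positivity
    linarith

lemma aux_adj {n d : ℕ} (M : Matrix (Fin d) (Fin n) ℝ) (w : EuclideanSpace ℝ (Fin d))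
    (v : EuclideanSpace ℝ (Fin n)) :
    ⟪Matrix.toEuclideanLin M.transpose w, v⟫_ℝ = ⟪w, Matrix.toEuclideanLin M v⟫_ℝ := by
  rw [← Matrix.conjTranspose_eq_transpose_of_trivial,
    Matrix.toEuclideanLin_conjTranspose_eq_adjoint]
  exact LinearMap.adjoint_inner_left _ _ _

lemma aux_expand {n d : ℕ} (ρ : ℝ) (M : Matrix (Fin d) (Fin n) ℝ)
    (b : EuclideanSpace ℝ (Fin d)) (x1 x2 y v : EuclideanSpace ℝ (Fin n)) (t : ℝ) :
    (1/2)*‖Matrix.toEuclideanLin M (x2 + t•v) - b‖^2 + ⟪y, x1 - (x2 + t•v)⟫_ℝ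
      + (ρ/2)*‖x1 - (x2+t•v)‖^2
    = (1/2)*‖Matrix.toEuclideanLin M x2 - b‖^2 + ⟪y, x1 - x2⟫_ℝ + (ρ/2)*‖x1 - x2‖^2
      + (((1/2)*‖Matrix.toEuclideanLin M v‖^2 + (ρ/2)*‖v‖^2)*t^2
        + ⟪Matrix.toEuclideanLin M.transpose (Matrix.toEuclideanLin M x2 - b) - y
            + ρ•(x2-x1), v⟫_ℝ * t) := by
  have e1 : Matrix.toEuclideanLin M (x2 + t•v) - b
      = (Matrix.toEuclideanLin M x2 - b) + t • Matrix.toEuclideanLin M v := by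
    rw [map_add, map_smul]; abel
  have e2 : x1 - (x2 + t•v) = (x1 - x2) + (-t)•v := by
    rw [neg_smul]; abel
  rw [e1, e2, norm_add_sq_real, norm_add_sq_real]
  simp only [inner_smul_right, inner_add_left, inner_add_right, inner_sub_left,
    inner_smul_left, norm_smul, Real.norm_eq_abs, mul_pow, sq_abs,
    real_inner_smul_right, aux_adj, RCLike.ofReal_real_eq_id, id_eq, conj_trivial]
  ring

set_option maxHeartbeats 1000000 in
set_option synthInstance.maxHeartbeats 400000 in
theorem primal_error_bound_reduction
    (n d : ℕ) (ρ : ℝ) (hρ : 0 < ρ)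
    (M : Matrix (Fin d) (Fin n) ℝ) (b : EuclideanSpace ℝ (Fin d))
    (h : EuclideanSpace ℝ (Fin n) → ℝ) (hconv : ConvexOn ℝ Set.univ h)
    (P : EuclideanSpace ℝ (Fin n) → EuclideanSpace ℝ (Fin n))
    (hP : ∀ z u, h (P z) + (1 / 2) * ‖P z - z‖ ^ 2 ≤ h u + (1 / 2) * ‖u - z‖ ^ 2) :
    let E := EuclideanSpace ℝ (Fin n)
    let L : E → E → E → ℝ := fun x1 x2 y =>
      h x1 + (1 / 2) * ‖Matrix.toEuclideanLin M x2 - b‖ ^ 2 + ⟪y, x1 - x2⟫_ℝ +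
        (ρ / 2) * ‖x1 - x2‖ ^ 2
    let X : E → Set (E × E) := fun y => {p | ∀ q : E × E, L p.1 p.2 y ≤ L q.1 q.2 y}
    let X2 : E → Set E := fun y => Prod.snd '' X y
    let r1 : E → E → E → E := fun x1 x2 y => x1 - P (x1 - y - ρ • (x1 - x2))
    let r2 : E → E → E → E := fun x1 x2 y =>
      Matrix.toEuclideanLin M.transpose (Matrix.toEuclideanLin M x2 - b) - y +
        ρ • (x2 - x1)
    let R : E → E → E → ℝ := fun x1 x2 y =>
      Real.sqrt (‖r1 x1 x2 y‖ ^ 2 + ‖r2 x1 x2 y‖ ^ 2)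
    (∀ y, (X y).Nonempty) →
    ∀ τ' δ : ℝ, 0 ≤ τ' → 0 < δ →
      (∀ x1 x2 y, R x1 x2 y ≤ δ → Metric.infDist x2 (X2 y) ≤ τ' * R x1 x2 y) →
      ∃ τ : ℝ, 0 ≤ τ ∧
        ∀ x1 x2 y, R x1 x2 y ≤ δ →
          Metric.infDist (x1, x2) (X y) ≤ τ * R x1 x2 y := by
  intro E L X X2 r1 r2 R hne τ' δ hτ' hδ hb
  classical
  set T : E →ₗ[ℝ] EuclideanSpace ℝ (Fin d) := Matrix.toEuclideanLin M with hT
  set Tt : EuclideanSpace ℝ (Fin d) →ₗ[ℝ] E := Matrix.toEuclideanLin M.transpose with hTt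
  set A : E →ₗ[ℝ] E := Tt ∘ₗ T with hA
  set K : ℝ := ‖LinearMap.toContinuousLinearMap A‖ with hK
  have hK0 : 0 ≤ K := norm_nonneg _
  have hAle : ∀ v : E, ‖A v‖ ≤ K * ‖v‖ := by
    intro v
    have := (LinearMap.toContinuousLinearMap A).le_opNorm v
    simpa using this
  -- stationarity in x2 at any minimizer
  have hstat : ∀ (y : E) (p : E × E), p ∈ X y → r2 p.1 p.2 y = 0 := by
    intro y p hp
    have hz : ∀ v : E, ⟪r2 p.1 p.2 y, v⟫_ℝ = 0 := by
      intro v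
      have ha : (0:ℝ) ≤ (1/2)*‖Matrix.toEuclideanLin M v‖^2 + (ρ/2)*‖v‖^2 := by
        positivity
      refine aux_quad_coeff _ (⟪r2 p.1 p.2 y, v⟫_ℝ) ha ?_
      intro t
      have hmin : L p.1 p.2 y ≤ L p.1 (p.2 + t • v) y := hp (p.1, p.2 + t • v)
      have hexp := aux_expand ρ M b p.1 p.2 y v t
      have hL1 : L p.1 (p.2 + t • v) y = h p.1
          + ((1/2)*‖Matrix.toEuclideanLin M (p.2 + t•v) - b‖^2
            + ⟪y, p.1 - (p.2 + t•v)⟫_ℝ + (ρ/2)*‖p.1 - (p.2+t•v)‖^2) := by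
        show _ = _; simp only [L]; ring
      have hL2 : L p.1 p.2 y = h p.1
          + ((1/2)*‖Matrix.toEuclideanLin M p.2 - b‖^2
            + ⟪y, p.1 - p.2⟫_ℝ + (ρ/2)*‖p.1 - p.2‖^2) := by
        simp only [L]; ring
      have hr2eq : r2 p.1 p.2 y
          = Matrix.toEuclideanLin M.transpose (Matrix.toEuclideanLin M p.2 - b) - y
            + ρ•(p.2-p.1) := rfl
      rw [hL1, hL2, hexp, ← hr2eq] at hmin
      linarith
    have := hz (r2 p.1 p.2 y)
    exact inner_self_eq_zero.mp this
  refine ⟨(1 + K/ρ)*τ' + 1/ρ, by positivity, ?_⟩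
  intro x1 x2 y hR
  set Rv : ℝ := R x1 x2 y with hRv
  have hRnn : 0 ≤ Rv := Real.sqrt_nonneg _
  have hr2le : ‖r2 x1 x2 y‖ ≤ Rv := by
    rw [hRv, show R x1 x2 y = Real.sqrt (‖r1 x1 x2 y‖^2 + ‖r2 x1 x2 y‖^2) from rfl]
    exact Real.le_sqrt_of_sq_le (le_add_of_nonneg_left (by positivity))
  apply le_of_forall_sub_le
  intro ε hε
  have hC : (0:ℝ) < 1 + K/ρ := by positivity
  set ε' : ℝ := ε / (1 + K/ρ) with hε'def
  have hε' : 0 < ε' := by positivity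
  -- find a near-minimizer of block 2
  have hne2 : (X2 y).Nonempty := (hne y).image _
  have hlt : Metric.infDist x2 (X2 y) < τ' * Rv + ε' := by
    have := hb x1 x2 y hR
    rw [← hRv] at this; linarith
  obtain ⟨z, hz, hzd⟩ := (Metric.infDist_lt_iff hne2).mp hlt
  obtain ⟨p, hpX, hp2⟩ := hz
  rw [← hp2] at hzd
  have hst : r2 p.1 p.2 y = 0 := hstat y p hpX
  -- the identity
  have hid : ρ • (x1 - p.1) = ρ • (x2 - p.2) + A (x2 - p.2) - r2 x1 x2 y := by
    have h1 : r2 x1 x2 y = Tt (T x2) - Tt b - y + ρ•(x2-x1) := by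
      show Tt (T x2 - b) - y + ρ•(x2-x1) = _
      rw [map_sub]
    have h2 : Tt (T p.2) - Tt b - y + ρ•(p.2-p.1) = 0 := by
      have h3 : Tt (T p.2 - b) - y + ρ•(p.2-p.1) = 0 := hst
      rw [map_sub] at h3; exact h3
    have hAeq : A (x2 - p.2) = Tt (T x2) - Tt (T p.2) := by
      show Tt (T (x2 - p.2)) = _
      rw [map_sub, map_sub]
    rw [h1, hAeq]
    have h4 : ρ • (x1 - p.1)
        - (ρ • (x2 - p.2) + (Tt (T x2) - Tt (T p.2))
          - (Tt (T x2) - Tt b - y + ρ•(x2-x1)))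
        - (Tt (T p.2) - Tt b - y + ρ•(p.2-p.1)) = 0 := by
      rw [smul_sub, smul_sub, smul_sub, smul_sub]; abel
    rw [h2, sub_zero, sub_eq_zero] at h4
    exact h4
  have hn1 : ρ * ‖x1 - p.1‖ ≤ ρ * ‖x2 - p.2‖ + K * ‖x2 - p.2‖ + ‖r2 x1 x2 y‖ := by
    have e : ρ * ‖x1 - p.1‖ = ‖ρ • (x1 - p.1)‖ := by
      rw [norm_smul, Real.norm_of_nonneg hρ.le]
    rw [e, hid]
    calc ‖ρ • (x2 - p.2) + A (x2 - p.2) - r2 x1 x2 y‖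
        ≤ ‖ρ • (x2 - p.2) + A (x2 - p.2)‖ + ‖r2 x1 x2 y‖ := norm_sub_le _ _
      _ ≤ ‖ρ • (x2 - p.2)‖ + ‖A (x2 - p.2)‖ + ‖r2 x1 x2 y‖ := by
          linarith [norm_add_le (ρ • (x2 - p.2)) (A (x2 - p.2))]
      _ ≤ ρ * ‖x2 - p.2‖ + K * ‖x2 - p.2‖ + ‖r2 x1 x2 y‖ := by
          have := hAle (x2 - p.2)
          rw [norm_smul, Real.norm_of_nonneg hρ.le]
          linarith
  set D2 : ℝ := ‖x2 - p.2‖ with hD2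
  have hd2lt : D2 < τ' * Rv + ε' := by
    rw [hD2, ← dist_eq_norm]; exact hzd
  set τ : ℝ := (1 + K/ρ)*τ' + 1/ρ with hτdef
  have hρτ : ρ * τ = (ρ + K)*τ' + 1 := by rw [hτdef]; field_simp
  have hρC : ρ * (1 + K/ρ) = ρ + K := by field_simp
  have hkey : (ρ + K) * D2 ≤ (ρ + K) * (τ' * Rv + ε') :=
    mul_le_mul_of_nonneg_left hd2lt.le (by linarith)
  -- bound on first block distance
  have hb1 : dist x1 p.1 ≤ τ * Rv + (1 + K/ρ) * ε' := by
    rw [dist_eq_norm]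
    refine le_of_mul_le_mul_left ?_ hρ
    have expand : ρ * (τ * Rv + (1 + K/ρ) * ε')
        = (ρ * τ) * Rv + (ρ * (1 + K/ρ)) * ε' := by ring
    rw [expand, hρτ, hρC]
    nlinarith [hn1, hkey, hr2le]
  have hb2 : dist x2 p.2 ≤ τ * Rv + (1 + K/ρ) * ε' := by
    rw [dist_eq_norm, ← hD2]
    have h1 : τ' * Rv ≤ (1 + K/ρ) * τ' * Rv := by nlinarith [mul_nonneg hτ' hRnn]
    have h2 : ε' ≤ (1 + K/ρ) * ε' := by nlinarith
    have h3 : 0 ≤ (1/ρ) * Rv := by positivity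
    rw [hτdef]; nlinarith
  have hdle : Metric.infDist (x1, x2) (X y) ≤ τ * Rv + (1 + K/ρ) * ε' := by
    calc Metric.infDist (x1, x2) (X y) ≤ dist (x1, x2) p :=
          Metric.infDist_le_dist_of_mem hpX
      _ = max (dist x1 p.1) (dist x2 p.2) := by rw [Prod.dist_eq]
      _ ≤ τ * Rv + (1 + K/ρ) * ε' := max_le hb1 hb2
  have hCε : (1 + K/ρ) * ε' = ε := by
    rw [hε'def]; field_simp
  rw [hCε] at hdle
  linarith
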